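/- Let A be an n×n essentially nonnegative real matrix (a^i_j ≥ 0 for i ≠ j) that is irreducible. Then for every t > 0, all entries of exp(tA) are strictly positive. -/

import Mathlib

open NormedSpace

/-- `A` is reducible if `n = 1` and `A = 0`, or `A` is cogredient (conjugate by a
permutation) to a block lower triangular matrix with square diagonal blocks, i.e. there
is a permutation `σ` and `0 < k < n` such that the corresponding top-right block
vanishes. -/
def Matrix.IsReducible {n : ℕ} (A : Matrix (Fin n) (Fin n) ℝ) : Prop :=
  (n = 1 ∧ A = 0) ∨
    ∃ (σ : Equiv.Perm (Fin n)) (k : ℕ), 0 < k ∧ k < n ∧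
      ∀ i j : Fin n, (i : ℕ) < k → k ≤ (j : ℕ) → A (σ i) (σ j) = 0

/-- `A` is irreducible if it is not reducible. -/
def Matrix.IsIrreducible' {n : ℕ} (A : Matrix (Fin n) (Fin n) ℝ) : Prop :=
  ¬ A.IsReducible

section Aux

variable {n : ℕ}

/-- entries of powers of an entrywise-nonnegative matrix are nonnegative -/
lemma pow_entry_nonneg {B : Matrix (Fin n) (Fin n) ℝ} (h : ∀ i j, 0 ≤ B i j) :
    ∀ m (i j : Fin n), 0 ≤ (B ^ m) i j := by
  intro m
  induction m with
  | zero =>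
    intro i j
    simp only [pow_zero, Matrix.one_apply]
    split <;> norm_num
  | succ m ih =>
    intro i j
    rw [pow_succ, Matrix.mul_apply]
    exact Finset.sum_nonneg fun a _ => mul_nonneg (ih i a) (h a j)

/-- If there is a "block" witnessed by a set `T` (nonempty, proper, no edges out of `T`),
then `A` is reducible. -/
lemma isReducible_of_invariant_set (A : Matrix (Fin n) (Fin n) ℝ) (T : Finset (Fin n))
    (hTne : T.Nonempty) (hTproper : T ≠ Finset.univ)
    (hblock : ∀ a ∈ T, ∀ b ∉ T, A a b = 0) : A.IsReducible := by
  classical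
  set k := T.card with hk
  have hkpos : 0 < k := Finset.card_pos.mpr hTne
  have hkn : k < n := by
    have := Finset.card_lt_card (Finset.ssubset_univ_iff.mpr hTproper)
    simpa [Fintype.card_fin] using this
  have hkk : n = k + (n - k) := by omega
  have hcompl : Tᶜ.card = n - k := by
    simp [Finset.card_compl, Fintype.card_fin]; rfl
  let e1 : Fin k ≃o {x // x ∈ T} := T.orderIsoOfFin rfl
  let e2 : Fin (n - k) ≃o {x // x ∈ Tᶜ} := Tᶜ.orderIsoOfFin hcompl
  let e2' : {x // x ∈ Tᶜ} ≃ {x : Fin n // ¬ x ∈ T} :=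
    Equiv.subtypeEquivRight (fun x => by simp [Finset.mem_compl])
  let σ : Equiv.Perm (Fin n) :=
    ((finCongr hkk).trans finSumFinEquiv.symm).trans
      (((e1.toEquiv.sumCongr (e2.toEquiv.trans e2'))).trans
        (Equiv.sumCompl (fun x : Fin n => x ∈ T)))
  have hσ_lt : ∀ i : Fin n, (i : ℕ) < k → σ i ∈ T := by
    intro i hi
    have hx : (finCongr hkk) i = Fin.castAdd (n - k) ⟨(i : ℕ), hi⟩ := by
      apply Fin.ext; simp
    show (((e1.toEquiv.sumCongr (e2.toEquiv.trans e2'))).trans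
        (Equiv.sumCompl (fun x : Fin n => x ∈ T)))
        (finSumFinEquiv.symm ((finCongr hkk) i)) ∈ T
    rw [hx, finSumFinEquiv_symm_apply_castAdd]
    simp only [Equiv.trans_apply, Equiv.sumCongr_apply, Sum.map_inl,
      Equiv.sumCompl_apply_inl]
    exact (e1 ⟨(i : ℕ), hi⟩).2
  have hσ_ge : ∀ j : Fin n, k ≤ (j : ℕ) → σ j ∉ T := by
    intro j hj
    have hjlt : (j : ℕ) - k < n - k := by omega
    have hx : (finCongr hkk) j = Fin.natAdd k ⟨(j : ℕ) - k, hjlt⟩ := by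
      apply Fin.ext; simp; omega
    show (((e1.toEquiv.sumCongr (e2.toEquiv.trans e2'))).trans
        (Equiv.sumCompl (fun x : Fin n => x ∈ T)))
        (finSumFinEquiv.symm ((finCongr hkk) j)) ∉ T
    rw [hx, finSumFinEquiv_symm_apply_natAdd]
    simp only [Equiv.trans_apply, Equiv.sumCongr_apply, Sum.map_inr,
      Equiv.sumCompl_apply_inr]
    exact (e2' (e2.toEquiv ⟨(j : ℕ) - k, hjlt⟩)).2
  exact Or.inr ⟨σ, k, hkpos, hkn, fun i j hik hjk =>
    hblock _ (hσ_lt i hik) _ (hσ_ge j hjk)⟩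

/-- Irreducibility implies every vertex is reachable from every vertex in the
digraph of nonzero off-diagonal entries. -/
lemma reach_of_irreducible {A : Matrix (Fin n) (Fin n) ℝ} (hirr : A.IsIrreducible') :
    ∀ i j : Fin n, Relation.ReflTransGen (fun a b => a ≠ b ∧ A a b ≠ 0) i j := by
  classical
  by_contra hc
  push_neg at hc
  obtain ⟨i, j, hij⟩ := hc
  set R : Fin n → Fin n → Prop := fun a b => a ≠ b ∧ A a b ≠ 0 with hR
  set T : Finset (Fin n) := Finset.univ.filter (fun x => Relation.ReflTransGen R i x) with hT
  have hiT : i ∈ T := by simp only [hT, Finset.mem_filter, Finset.mem_univ, true_and]; exact Relation.ReflTransGen.refl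
  have hjT : j ∉ T := by simp [hT]; exact hij
  apply hirr
  apply isReducible_of_invariant_set A T ⟨i, hiT⟩
  · intro h
    exact hjT (h ▸ Finset.mem_univ j)
  · intro a ha b hb
    by_contra hab
    have hne : a ≠ b := by rintro rfl; exact hb ha
    have hreach : Relation.ReflTransGen R i a := by
      simpa [hT] using ha
    exact hb (by simp [hT]; exact hreach.tail ⟨hne, hab⟩)

/-- Positivity of an entry of some power along a reachability path. -/
lemma exists_pow_entry_pos {B : Matrix (Fin n) (Fin n) ℝ}
    (hnn : ∀ i j, 0 ≤ B i j) (hdiag : ∀ i, 0 < B i i)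
    {i j : Fin n} (h : Relation.ReflTransGen (fun a b => a ≠ b ∧ B a b ≠ 0) i j) :
    ∃ m, 0 < (B ^ m) i j := by
  induction h with
  | refl => exact ⟨0, by simp⟩
  | @tail b c hib hbc ih =>
    obtain ⟨m, hm⟩ := ih
    refine ⟨m + 1, ?_⟩
    rw [pow_succ, Matrix.mul_apply]
    apply Finset.sum_pos'
    · intro a _
      exact mul_nonneg (pow_entry_nonneg hnn m i a) (hnn a c)
    · exact ⟨b, Finset.mem_univ b, mul_pos hm (lt_of_le_of_ne (hnn b c) (Ne.symm hbc.2))⟩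

/-- Every entry of `exp` of an entrywise-nonnegative matrix with positive diagonal is
positive, provided every vertex reaches every other. -/
lemma exp_entry_pos_of_nonneg {B : Matrix (Fin n) (Fin n) ℝ}
    (hnn : ∀ i j, 0 ≤ B i j) (hdiag : ∀ i, 0 < B i i)
    (hreach : ∀ i j : Fin n, Relation.ReflTransGen (fun a b => a ≠ b ∧ B a b ≠ 0) i j)
    (i j : Fin n) : 0 < exp B i j := by
  letI : SeminormedRing (Matrix (Fin n) (Fin n) ℝ) := Matrix.linftyOpSemiNormedRing
  letI : NormedRing (Matrix (Fin n) (Fin n) ℝ) := Matrix.linftyOpNormedRing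
  letI : NormedAlgebra ℝ (Matrix (Fin n) (Fin n) ℝ) := Matrix.linftyOpNormedAlgebra
  have hsum : HasSum (fun m : ℕ => ((m.factorial : ℝ)⁻¹) • B ^ m) (exp B) :=
    exp_series_hasSum_exp' (𝕂 := ℝ) B
  -- map through the (continuous, additive) entry-evaluation
  have hcont : Continuous fun M : Matrix (Fin n) (Fin n) ℝ => M i j :=
    (continuous_apply j).comp (continuous_apply i)
  let φ : Matrix (Fin n) (Fin n) ℝ →+ ℝ :=
    { toFun := fun M => M i j
      map_zero' := rfl
      map_add' := fun _ _ => rfl }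
  have hsum' : HasSum (fun m : ℕ => ((m.factorial : ℝ)⁻¹) * (B ^ m) i j) (exp B i j) := by
    have := hsum.map φ hcont
    exact this
  obtain ⟨m₀, hm₀⟩ := exists_pow_entry_pos hnn hdiag (hreach i j)
  have hnonneg : ∀ m : ℕ, 0 ≤ ((m.factorial : ℝ)⁻¹) * (B ^ m) i j := fun m =>
    mul_nonneg (by positivity) (pow_entry_nonneg hnn m i j)
  have hpos : 0 < ((m₀.factorial : ℝ)⁻¹) * (B ^ m₀) i j :=
    mul_pos (by positivity) hm₀
  calc 0 < ((m₀.factorial : ℝ)⁻¹) * (B ^ m₀) i j := hpos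
    _ ≤ exp B i j := le_hasSum hsum' m₀ fun m _ => hnonneg m

end Aux

/-- If `A` is essentially nonnegative (off-diagonal entries nonnegative) and
irreducible, then all entries of `exp (t • A)` are strictly positive for `t > 0`. -/
theorem exp_entries_pos_of_essentially_nonneg_irreducible (n : ℕ)
    (A : Matrix (Fin n) (Fin n) ℝ)
    (hA : ∀ i j : Fin n, i ≠ j → 0 ≤ A i j)
    (hirr : A.IsIrreducible') :
    ∀ t : ℝ, 0 < t → ∀ i j : Fin n, 0 < exp (t • A) i j := by
  intro t ht i j
  classical
  set c : ℝ := 1 + t * (∑ x : Fin n, |A x x|) with hc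
  set B : Matrix (Fin n) (Fin n) ℝ := t • A + c • (1 : Matrix (Fin n) (Fin n) ℝ) with hB
  have habs : ∀ x : Fin n, |A x x| ≤ ∑ y : Fin n, |A y y| := by
    intro x
    exact Finset.single_le_sum (f := fun y => |A y y|) (fun y _ => abs_nonneg _)
      (Finset.mem_univ x)
  have hBdiag : ∀ x : Fin n, 0 < B x x := by
    intro x
    have h1 : B x x = t * A x x + c := by
      simp [hB, Matrix.add_apply, Matrix.smul_apply, Matrix.one_apply, smul_eq_mul]
    rw [h1, hc]
    have h2 : t * |A x x| ≤ t * ∑ y : Fin n, |A y y| :=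
      mul_le_mul_of_nonneg_left (habs x) ht.le
    have h3 : -(t * A x x) ≤ t * |A x x| := by
      rw [← mul_neg]
      exact mul_le_mul_of_nonneg_left (neg_le_abs _) ht.le
    nlinarith
  have hBoff : ∀ x y : Fin n, x ≠ y → B x y = t * A x y := by
    intro x y hxy
    simp [hB, Matrix.add_apply, Matrix.smul_apply, Matrix.one_apply, hxy, smul_eq_mul]
  have hBnn : ∀ x y : Fin n, 0 ≤ B x y := by
    intro x y
    by_cases hxy : x = y
    · subst hxy; exact (hBdiag x).le
    · rw [hBoff x y hxy]
      exact mul_nonneg ht.le (hA x y hxy)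
  have hreachA := reach_of_irreducible hirr
  have hreachB : ∀ x y : Fin n,
      Relation.ReflTransGen (fun a b => a ≠ b ∧ B a b ≠ 0) x y := by
    intro x y
    refine Relation.ReflTransGen.mono ?_ _ _ (hreachA x y)
    rintro a b ⟨hab, hA0⟩
    refine ⟨hab, ?_⟩
    rw [hBoff a b hab]
    exact mul_ne_zero ht.ne' hA0
  -- exp (t • A) = Real.exp (-c) • exp B
  letI : SeminormedRing (Matrix (Fin n) (Fin n) ℝ) := Matrix.linftyOpSemiNormedRing
  letI : NormedRing (Matrix (Fin n) (Fin n) ℝ) := Matrix.linftyOpNormedRing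
  letI : NormedAlgebra ℝ (Matrix (Fin n) (Fin n) ℝ) := Matrix.linftyOpNormedAlgebra
  have hsplit : t • A = B + (-c) • (1 : Matrix (Fin n) (Fin n) ℝ) := by
    rw [hB]; module
  have hcomm : Commute B ((-c) • (1 : Matrix (Fin n) (Fin n) ℝ)) :=
    (Commute.one_right B).smul_right _
  have hexp1 : exp ((-c) • (1 : Matrix (Fin n) (Fin n) ℝ))
      = Real.exp (-c) • (1 : Matrix (Fin n) (Fin n) ℝ) := by
    have h1 : (-c) • (1 : Matrix (Fin n) (Fin n) ℝ)
        = algebraMap ℝ (Matrix (Fin n) (Fin n) ℝ) (-c) :=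
      (Algebra.algebraMap_eq_smul_one _).symm
    erw [h1, ← algebraMap_exp_comm, ← Real.exp_eq_exp_ℝ,
      Algebra.algebraMap_eq_smul_one]
  have hmain : exp (t • A) = Real.exp (-c) • exp B := by
    rw [hsplit, Matrix.exp_add_of_commute B _ hcomm, hexp1, mul_smul_comm, mul_one]
  rw [hmain]
  have := exp_entry_pos_of_nonneg hBnn hBdiag hreachB i j
  simpa [Matrix.smul_apply, smul_eq_mul] using
    mul_pos (Real.exp_pos (-c)) this
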